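/- For every p ≥ 2, a 2p-dimensional 2-step nilpotent Lie algebra over K (K = ℝ or ℂ) with characteristic sequence (2,1,…,1) admits a symplectic form if and only if it is isomorphic to h₃ ⊕ K^{2p−3}, the direct product of the 3-dimensional Heisenberg Lie algebra with the (2p−3)-dimensional abelian Lie algebra. -/

import Mathlib

/-- A symplectic form on a Lie algebra `g` over `K`: a `K`-bilinear form which is
alternating, nondegenerate and closed, i.e.
`θ ⁅X,Y⁆ Z + θ ⁅Y,Z⁆ X + θ ⁅Z,X⁆ Y = 0` for all `X Y Z`. -/
def IsSymplecticForm (K : Type*) [RCLike K] (g : Type*) [LieRing g] [LieAlgebra K g]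
    (θ : g → g → K) : Prop :=
  (∀ (a : K) (X Y Z : g), θ (a • X + Y) Z = a * θ X Z + θ Y Z) ∧
  (∀ (a : K) (X Y Z : g), θ X (a • Y + Z) = a * θ X Y + θ X Z) ∧
  (∀ X : g, θ X X = 0) ∧
  (∀ X : g, (∀ Y : g, θ X Y = 0) → X = 0) ∧
  (∀ X Y Z : g, θ ⁅X, Y⁆ Z + θ ⁅Y, Z⁆ X + θ ⁅Z, X⁆ Y = 0)
/-- A Lie algebra is 2-step nilpotent if `[[g,g],g] = 0` and `[g,g] ≠ 0`. -/
def IsTwoStepNilpotent (g : Type*) [LieRing g] : Prop :=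
  (∀ X Y Z : g, ⁅⁅X, Y⁆, Z⁆ = 0) ∧ ∃ X Y : g, ⁅X, Y⁆ ≠ 0
/-- A 2-step nilpotent Lie algebra has characteristic sequence `(2,…,2,1,…,1)` with exactly
`k` twos iff the maximum of `rank (ad X) = dim ⁅X, g⁆` over `X ∈ g \ [g,g]` equals `k`. -/
def HasCharSeqTwos (K : Type*) [RCLike K] (g : Type*) [LieRing g] [LieAlgebra K g]
    (k : ℕ) : Prop :=
  (∀ X : g, X ∉ LieAlgebra.derivedSeries K g 1 →
      Module.finrank K ↥(LinearMap.range (LieAlgebra.ad K g X)) ≤ k) ∧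
  ∃ X : g, X ∉ LieAlgebra.derivedSeries K g 1 ∧
      Module.finrank K ↥(LinearMap.range (LieAlgebra.ad K g X)) = k
/-- The direct product `h_{2p+1} ⊕ K^m` of the `(2p+1)`-dimensional Heisenberg Lie algebra
(with basis `X_1,…,X_{2p},Z` and nonzero brackets `⁅X_{2i-1}, X_{2i}⁆ = Z`) with the
`m`-dimensional abelian Lie algebra, realized on
`((Fin p → K) × (Fin p → K)) × (K × (Fin m → K))` with bracket
`⁅(a,b,c,d), (a',b',c',d')⁆ = (0, 0, ∑ i, (a i * b' i - a' i * b i), 0)`. -/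
abbrev HeisenbergAbelian (K : Type*) [RCLike K] (p m : ℕ) : Type _ :=
  ((Fin p → K) × (Fin p → K)) × (K × (Fin m → K))

namespace HeisenbergAbelian

variable {K : Type*} [RCLike K] {p m : ℕ}

/-- The Lie bracket of `h_{2p+1} ⊕ K^m`. -/
def brak (x y : HeisenbergAbelian K p m) : HeisenbergAbelian K p m :=
  ((0, 0), (∑ i, (x.1.1 i * y.1.2 i - y.1.1 i * x.1.2 i), 0))

instance (priority := 5000) : LieRing (HeisenbergAbelian K p m) where
  bracket := brak
  add_lie x y z := by
    show brak (x + y) z = brak x z + brak y z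
    simp only [brak, Prod.fst_add, Prod.snd_add, Pi.add_apply, Prod.mk_add_mk, add_zero,
      Prod.mk.injEq, true_and, and_true, ← Finset.sum_add_distrib]
    exact Finset.sum_congr rfl fun i _ => by ring
  lie_add x y z := by
    show brak x (y + z) = brak x y + brak x z
    simp only [brak, Prod.fst_add, Prod.snd_add, Pi.add_apply, Prod.mk_add_mk, add_zero,
      Prod.mk.injEq, true_and, and_true, ← Finset.sum_add_distrib]
    exact Finset.sum_congr rfl fun i _ => by ring
  lie_self x := by
    show brak x x = 0
    simp only [brak, sub_self, Finset.sum_const_zero]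
    rfl
  leibniz_lie x y z := by
    show brak x (brak y z) = brak (brak x y) z + brak y (brak x z)
    simp only [brak, Prod.mk_add_mk, Prod.mk.injEq, Pi.zero_apply, mul_zero, zero_mul,
      sub_self, Finset.sum_const_zero, add_zero, zero_add, and_true, true_and]

instance (priority := 5000) : LieAlgebra K (HeisenbergAbelian K p m) where
  lie_smul t x y := by
    show brak x (t • y) = t • brak x y
    simp only [brak, Prod.smul_fst, Prod.smul_snd, Pi.smul_apply, Prod.smul_mk, smul_zero,
      smul_eq_mul, Prod.mk.injEq, true_and, and_true, Finset.mul_sum]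
    exact Finset.sum_congr rfl fun i _ => by ring

end HeisenbergAbelian

lemma HeisenbergAbelian.brak_eq {K : Type*} [RCLike K] {p m : ℕ}
    (x y : HeisenbergAbelian K p m) : ⁅x, y⁆ = HeisenbergAbelian.brak x y := rfl

section ModelForm

variable {K : Type*} [RCLike K] {m t : ℕ}

/-- The candidate symplectic form on the model. -/
def modelForm (L : ((Fin 1 → K) × (Fin m → K)) ≃ₗ[K] ((Fin t → K) × (Fin t → K)))
    (u v : HeisenbergAbelian K 1 m) : K :=
  u.1.1 0 * v.2.1 - v.1.1 0 * u.2.1 +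
    ∑ i, ((L (u.1.2, u.2.2)).1 i * (L (v.1.2, v.2.2)).2 i -
          (L (v.1.2, v.2.2)).1 i * (L (u.1.2, u.2.2)).2 i)

lemma modelForm_isSymplectic
    (L : ((Fin 1 → K) × (Fin m → K)) ≃ₗ[K] ((Fin t → K) × (Fin t → K))) :
    IsSymplecticForm K (HeisenbergAbelian K 1 m) (modelForm L) := by
  have harg : ∀ (a : K) (X Y : HeisenbergAbelian K 1 m),
      L ((a • X + Y).1.2, (a • X + Y).2.2)
        = a • L (X.1.2, X.2.2) + L (Y.1.2, Y.2.2) := by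
    intro a X Y
    rw [← map_smul, ← map_add]
    rfl
  refine ⟨?_, ?_, ?_, ?_, ?_⟩
  · intro a X Y Z
    have hc1 : (a • X + Y).1.1 0 = a * X.1.1 0 + Y.1.1 0 := rfl
    have hc2 : (a • X + Y).2.1 = a * X.2.1 + Y.2.1 := rfl
    have hsum : ∀ (u v w : (Fin t → K) × (Fin t → K)),
        ∑ x, ((a • u + v).1 x * w.2 x - w.1 x * (a • u + v).2 x)
        = a * (∑ x, (u.1 x * w.2 x - w.1 x * u.2 x))
          + ∑ x, (v.1 x * w.2 x - w.1 x * v.2 x) := by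
      intro u v w
      rw [Finset.mul_sum, ← Finset.sum_add_distrib]
      refine Finset.sum_congr rfl fun i _ => ?_
      simp only [Prod.fst_add, Prod.snd_add, Prod.smul_fst, Prod.smul_snd, Pi.add_apply,
        Pi.smul_apply, smul_eq_mul]
      ring
    simp only [modelForm, harg, hc1, hc2, hsum]
    ring
  · intro a X Y Z
    have hc1 : (a • Y + Z).1.1 0 = a * Y.1.1 0 + Z.1.1 0 := rfl
    have hc2 : (a • Y + Z).2.1 = a * Y.2.1 + Z.2.1 := rfl
    have hsum : ∀ (u v w : (Fin t → K) × (Fin t → K)),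
        ∑ x, (w.1 x * (a • u + v).2 x - (a • u + v).1 x * w.2 x)
        = a * (∑ x, (w.1 x * u.2 x - u.1 x * w.2 x))
          + ∑ x, (w.1 x * v.2 x - v.1 x * w.2 x) := by
      intro u v w
      rw [Finset.mul_sum, ← Finset.sum_add_distrib]
      refine Finset.sum_congr rfl fun i _ => ?_
      simp only [Prod.fst_add, Prod.snd_add, Prod.smul_fst, Prod.smul_snd, Pi.add_apply,
        Pi.smul_apply, smul_eq_mul]
      ring
    simp only [modelForm, harg, hc1, hc2, hsum]
    ring
  · intro X
    simp [modelForm]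
  · intro X hX
    have hz : ∀ (a1 b1 : Fin 1 → K) (c1 : K) (d1 : Fin m → K),
        (b1, d1) = (0 : (Fin 1 → K) × (Fin m → K)) →
        modelForm L X ((a1, b1), (c1, d1)) = X.1.1 0 * c1 - a1 0 * X.2.1 := by
      intro a1 b1 c1 d1 hu
      simp only [modelForm]
      rw [show ((((a1, b1), (c1, d1)) : HeisenbergAbelian K 1 m).1.2,
        (((a1, b1), (c1, d1)) : HeisenbergAbelian K 1 m).2.2) = (b1, d1) from rfl, hu, map_zero]
      simp
    have e1 : X.1.1 0 = 0 := by
      have := hX ((0, 0), (1, 0))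
      rw [hz 0 0 1 0 rfl] at this
      simpa using this
    have e2 : X.2.1 = 0 := by
      have := hX (((fun _ => 1), 0), (0, 0))
      rw [hz (fun _ => 1) 0 0 0 rfl] at this
      simpa [e1] using this
    have k1 : ∀ j : Fin t, (L (X.1.2, X.2.2)).1 j = 0 := by
      intro j
      set bd := L.symm (0, Pi.single j (1:K)) with hbd
      have e := hX ((0, bd.1), (0, bd.2))
      have hRY : L ((((0, bd.1), (0, bd.2)) : HeisenbergAbelian K 1 m).1.2,
          (((0, bd.1), (0, bd.2)) : HeisenbergAbelian K 1 m).2.2) = (0, Pi.single j (1:K)) := by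
        show L (bd.1, bd.2) = _
        rw [show (bd.1, bd.2) = bd from rfl, hbd, L.apply_symm_apply]
      simp only [modelForm, hRY] at e
      simpa [Pi.single_apply, mul_ite, Finset.sum_ite_eq'] using e
    have k2 : ∀ j : Fin t, (L (X.1.2, X.2.2)).2 j = 0 := by
      intro j
      set bd := L.symm (Pi.single j (1:K), 0) with hbd
      have e := hX ((0, bd.1), (0, bd.2))
      have hRY : L ((((0, bd.1), (0, bd.2)) : HeisenbergAbelian K 1 m).1.2,
          (((0, bd.1), (0, bd.2)) : HeisenbergAbelian K 1 m).2.2) = (Pi.single j (1:K), 0) := by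
        show L (bd.1, bd.2) = _
        rw [show (bd.1, bd.2) = bd from rfl, hbd, L.apply_symm_apply]
      simp only [modelForm, hRY] at e
      simpa [Pi.single_apply, ite_mul, Finset.sum_ite_eq'] using e
    have e3 : L (X.1.2, X.2.2) = 0 := by
      ext j
      · exact k1 j
      · exact k2 j
    have e4 : (X.1.2, X.2.2) = (0 : (Fin 1 → K) × (Fin m → K)) := by
      have := congrArg L.symm e3
      rwa [L.symm_apply_apply, map_zero] at this
    have e7 : X.1.1 = 0 := by
      funext i
      rw [Subsingleton.elim i 0]; exact e1
    have e5 : X.1.2 = 0 := congrArg Prod.fst e4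
    have e6 : X.2.2 = 0 := congrArg Prod.snd e4
    show ((X.1.1, X.1.2), (X.2.1, X.2.2)) = ((0,0),(0,0))
    rw [e2, e7, e5, e6]
  · intro X Y Z
    have hb : ∀ U V W : HeisenbergAbelian K 1 m,
        modelForm L ⁅U, V⁆ W = - W.1.1 0 * (U.1.1 0 * V.1.2 0 - V.1.1 0 * U.1.2 0) := by
      intro U V W
      have h0 : L ((⁅U,V⁆ : HeisenbergAbelian K 1 m).1.2,
          (⁅U,V⁆ : HeisenbergAbelian K 1 m).2.2) = 0 := by
        rw [HeisenbergAbelian.brak_eq]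
        show L (0, 0) = 0
        exact map_zero L
      simp only [modelForm, h0]
      rw [HeisenbergAbelian.brak_eq]
      simp only [HeisenbergAbelian.brak, Fin.sum_univ_one, Prod.fst_zero, Prod.snd_zero,
        Pi.zero_apply, zero_mul, mul_zero, sub_self, Finset.sum_const_zero, add_zero, sub_zero]
      ring
    rw [hb X Y Z, hb Y Z X, hb Z X Y]
    ring

end ModelForm



section Aux
variable {K : Type*} [RCLike K]

lemma auxRankLeOne {g : Type*} [AddCommGroup g] [Module K g] [FiniteDimensional K g]
    (S : Submodule K g)
    (hS : Module.finrank K S ≤ 1) {a b : g} (ha : a ∈ S) (hb : b ∈ S) (ha0 : a ≠ 0) :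
    ∃ c : K, b = c • a := by
  by_contra h
  push_neg at h
  have hind : LinearIndependent K ![a, b] := by
    rw [LinearIndependent.pair_iff' ha0]
    intro c hc
    exact h c hc.symm
  have h1 : Submodule.span K (Set.range ![a, b]) ≤ S := by
    rw [Submodule.span_le]
    rintro v hv
    simp only [Matrix.range_cons, Matrix.range_empty, Set.union_empty, Set.union_singleton] at hv
    rcases hv with rfl | rfl
    · exact hb
    · exact ha
  have h2 := finrank_span_eq_card hind
  have h3 := Submodule.finrank_mono h1
  rw [h2] at h3
  simp at h3
  omega

variable {g : Type*} [LieRing g] [LieAlgebra K g]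

lemma auxDerivedCentral (h21 : ∀ X Y Z : g, ⁅⁅X, Y⁆, Z⁆ = 0)
    {X : g} (hX : X ∈ LieAlgebra.derivedSeries K g 1) : ∀ Z : g, ⁅X, Z⁆ = 0 := by
  have hmem : X ∈ Submodule.span K
      {m : g | ∃ x ∈ (⊤ : LieIdeal K g), ∃ n ∈ (⊤ : LieIdeal K g), ⁅x, n⁆ = m} := by
    rw [← LieSubmodule.lieIdeal_oper_eq_linear_span']
    exact hX
  refine Submodule.span_induction ?_ ?_ ?_ ?_ hmem
  · rintro m ⟨x, -, n, -, rfl⟩ Z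
    exact h21 x n Z
  · intro Z; simp
  · intro u v _ _ hu hv Z
    rw [add_lie, hu, hv, add_zero]
  · intro c u _ hu Z
    rw [smul_lie, hu, smul_zero]

end Aux

section Fwd
variable {K : Type*} [RCLike K] {g : Type*} [LieRing g] [LieAlgebra K g]
  [FiniteDimensional K g]

theorem forward_struct (p : ℕ) (hp : 2 ≤ p)
    (h21 : ∀ X Y Z : g, ⁅⁅X, Y⁆, Z⁆ = 0)
    (h22 : ∃ X Y : g, ⁅X, Y⁆ ≠ 0)
    (hdim : Module.finrank K g = 2 * p)
    (hc1 : ∀ X : g, X ∉ LieAlgebra.derivedSeries K g 1 →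
      Module.finrank K ↥(LinearMap.range (LieAlgebra.ad K g X)) ≤ 1)
    (θ : g → g → K)
    (hθ1 : ∀ (a : K) (X Y Z : g), θ (a • X + Y) Z = a * θ X Z + θ Y Z)
    (hθ2 : ∀ (a : K) (X Y Z : g), θ X (a • Y + Z) = a * θ X Y + θ X Z)
    (hθalt : ∀ X : g, θ X X = 0)
    (hθnd : ∀ X : g, (∀ Y : g, θ X Y = 0) → X = 0)
    (hθcl : ∀ X Y Z : g, θ ⁅X, Y⁆ Z + θ ⁅Y, Z⁆ X + θ ⁅Z, X⁆ Y = 0) :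
    ∃ (x y z : g) (D : Submodule K g),
      (∀ W : g, ⁅z, W⁆ = 0) ∧
      (∀ d ∈ D, ∀ W : g, ⁅d, W⁆ = 0) ∧
      (⁅x, y⁆ = z) ∧
      (z ≠ 0) ∧
      (∀ X : g, ∃ (a b s : K) (d : g), d ∈ D ∧ X = a • x + b • y + s • z + d) ∧
      (∀ (a b s : K) (d : g), d ∈ D → a • x + b • y + s • z + d = 0 →
          a = 0 ∧ b = 0 ∧ s = 0 ∧ d = 0) ∧
      Module.finrank K ↥D = 2 * p - 3 := by
  classical
  obtain ⟨x₀, y₀, hxy₀⟩ := h22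
  -- basic θ lemmas
  have θ01 : ∀ Z : g, θ 0 Z = 0 := by
    intro Z
    have h := hθ1 1 0 0 Z
    simp only [one_smul, add_zero, one_mul] at h
    linear_combination -h
  have θ02 : ∀ Z : g, θ Z 0 = 0 := by
    intro Z
    have h := hθ2 1 Z 0 0
    simp only [one_smul, add_zero, one_mul] at h
    linear_combination -h
  have θs1 : ∀ (c : K) (A W : g), θ (c • A) W = c * θ A W := by
    intro c A W
    have h := hθ1 c A 0 W
    rwa [add_zero, θ01, add_zero] at h
  have θs2 : ∀ (c : K) (A W : g), θ W (c • A) = c * θ W A := by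
    intro c A W
    have h := hθ2 c W A 0
    rwa [add_zero, θ02, add_zero] at h
  have θa1 : ∀ A B W : g, θ (A + B) W = θ A W + θ B W := by
    intro A B W
    have h := hθ1 1 A B W
    rwa [one_smul, one_mul] at h
  have θa2 : ∀ A B W : g, θ W (A + B) = θ W A + θ W B := by
    intro A B W
    have h := hθ2 1 W A B
    rwa [one_smul, one_mul] at h
  have θsub2 : ∀ A B W : g, θ W (A - B) = θ W A - θ W B := by
    intro A B W
    have h := θa2 (A - B) B W
    rw [sub_add_cancel] at h
    linear_combination -h
  -- rank of every ad is ≤ 1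
  have hrank : ∀ W : g, Module.finrank K ↥(LinearMap.range (LieAlgebra.ad K g W)) ≤ 1 := by
    intro W
    by_cases hW : W ∈ LieAlgebra.derivedSeries K g 1
    · have h0 : LinearMap.range (LieAlgebra.ad K g W) = ⊥ := by
        rw [LinearMap.range_eq_bot]
        ext Z
        simpa [LieAlgebra.ad_apply] using auxDerivedCentral h21 hW Z
      rw [h0, finrank_bot]
      omega
    · exact hc1 W hW
  have hgen : ∀ (W n : g), n ≠ 0 → (∃ A : g, ⁅W, A⁆ = n) → ∀ B : g, ∃ c : K, ⁅W, B⁆ = c • n := by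
    rintro W n hn ⟨A, hA⟩ B
    exact auxRankLeOne (LinearMap.range (LieAlgebra.ad K g W)) (hrank W)
      ⟨A, by simpa [LieAlgebra.ad_apply] using hA⟩ ⟨B, by simp [LieAlgebra.ad_apply]⟩ hn
  -- all brackets are multiples of z₀ := ⁅x₀, y₀⁆
  have hBr : ∀ U V : g, ∃ c : K, ⁅U, V⁆ = c • ⁅x₀, y₀⁆ := by
    intro U V
    by_cases h0 : ⁅U, V⁆ = 0
    · exact ⟨0, by rw [h0, zero_smul]⟩
    by_contra hno
    push_neg at hno
    have hznw : ∀ c : K, ⁅x₀, y₀⁆ ≠ c • ⁅U, V⁆ := by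
      intro c hc
      rcases eq_or_ne c 0 with rfl | hcne
      · rw [zero_smul] at hc; exact hxy₀ hc
      · refine hno c⁻¹ ?_
        rw [hc, smul_smul, inv_mul_cancel₀ hcne, one_smul]
    have hcancel : ∀ (c d : K) (A : g), A = c • ⁅x₀, y₀⁆ → A = d • ⁅U, V⁆ → A = 0 := by
      intro c d A h1 h2
      rcases eq_or_ne d 0 with rfl | hd
      · rw [h2, zero_smul]
      rcases eq_or_ne c 0 with rfl | hc
      · rw [h1, zero_smul]
      exfalso
      refine hznw (c⁻¹ * d) ?_
      rw [mul_smul, ← h2, h1, smul_smul, inv_mul_cancel₀ hc, one_smul]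
    have hx : ∀ B : g, ∃ c : K, ⁅x₀, B⁆ = c • ⁅x₀, y₀⁆ := hgen x₀ _ hxy₀ ⟨y₀, rfl⟩
    have hy : ∀ B : g, ∃ c : K, ⁅y₀, B⁆ = c • ⁅x₀, y₀⁆ := by
      intro B
      obtain ⟨c, hc⟩ := hgen y₀ (-⁅x₀, y₀⁆) (neg_ne_zero.2 hxy₀) ⟨x₀, by rw [← lie_skew]⟩ B
      exact ⟨-c, by rw [hc, smul_neg, neg_smul]⟩
    have hU : ∀ B : g, ∃ c : K, ⁅U, B⁆ = c • ⁅U, V⁆ := hgen U _ h0 ⟨V, rfl⟩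
    have hV : ∀ B : g, ∃ c : K, ⁅V, B⁆ = c • ⁅U, V⁆ := by
      intro B
      obtain ⟨c, hc⟩ := hgen V (-⁅U, V⁆) (neg_ne_zero.2 h0) ⟨U, by rw [← lie_skew]⟩ B
      exact ⟨-c, by rw [hc, smul_neg, neg_smul]⟩
    have hUy : ⁅U, y₀⁆ = 0 := by
      obtain ⟨δ, hδ⟩ := hy U
      obtain ⟨d, hd⟩ := hU y₀
      exact hcancel (-δ) d ⁅U, y₀⁆ (by rw [← lie_skew, hδ, neg_smul]) hd
    have hxV : ⁅x₀, V⁆ = 0 := by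
      obtain ⟨α, hα⟩ := hx V
      obtain ⟨c, hc⟩ := hV x₀
      exact hcancel α (-c) ⁅x₀, V⁆ hα (by rw [← lie_skew, hc, neg_smul])
    have h1 : ⁅x₀ + U, y₀⁆ = ⁅x₀, y₀⁆ := by rw [add_lie, hUy, add_zero]
    have h2 : ⁅x₀ + U, V⁆ = ⁅U, V⁆ := by rw [add_lie, hxV, zero_add]
    obtain ⟨c, hc⟩ := hgen (x₀ + U) _ hxy₀ ⟨y₀, h1⟩ V
    rw [h2] at hc
    exact hno c hc
  -- key fact from closedness
  have hKEY : ∀ U V : g, θ ⁅x₀, y₀⁆ U = 0 → θ ⁅x₀, y₀⁆ V = 0 → ⁅U, V⁆ = 0 := by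
    intro U V hU hV
    obtain ⟨W, hW⟩ : ∃ W : g, θ ⁅x₀, y₀⁆ W ≠ 0 := by
      by_contra hWn
      push_neg at hWn
      exact hxy₀ (hθnd _ hWn)
    obtain ⟨c, hc⟩ := hBr U V
    obtain ⟨c₁, hc₁⟩ := hBr V W
    obtain ⟨c₂, hc₂⟩ := hBr W U
    have h := hθcl U V W
    rw [hc, hc₁, hc₂, θs1, θs1, θs1, hU, hV] at h
    have hc0 : c = 0 := by
      have h' : c * θ ⁅x₀, y₀⁆ W = 0 := by linear_combination h
      exact (mul_eq_zero.1 h').resolve_right hW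
    rw [hc, hc0, zero_smul]
  -- choose x, y with ⁅x,y⁆ ≠ 0 and θ ⁅x,y⁆ y ≠ 0
  have hmain : ∃ x y : g, ⁅x, y⁆ ≠ 0 ∧ θ ⁅x, y⁆ y ≠ 0 := by
    by_cases hy₀ : θ ⁅x₀, y₀⁆ y₀ = 0
    · have hx₀ : θ ⁅x₀, y₀⁆ x₀ ≠ 0 := by
        intro hx₀
        exact hxy₀ (hKEY x₀ y₀ hx₀ hy₀)
      have hskew : ⁅y₀, x₀⁆ = -⁅x₀, y₀⁆ := by
        rw [← lie_skew]
      refine ⟨y₀, x₀, ?_, ?_⟩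
      · rw [hskew]
        exact neg_ne_zero.2 hxy₀
      · rw [hskew]
        have hth : θ (-⁅x₀, y₀⁆) x₀ = -θ ⁅x₀, y₀⁆ x₀ := by
          rw [← neg_one_smul K, θs1]; ring
        rw [hth]
        exact neg_ne_zero.2 hx₀
    · exact ⟨x₀, y₀, hxy₀, hy₀⟩
  obtain ⟨x, y, hz, hfy⟩ := hmain
  obtain ⟨c₃, h₃⟩ := hBr x y
  have hc₃ : c₃ ≠ 0 := by
    intro hc
    rw [hc, zero_smul] at h₃
    exact hz h₃
  have hBr' : ∀ U V : g, ∃ c : K, ⁅U, V⁆ = c • ⁅x, y⁆ := by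
    intro U V
    obtain ⟨c, hcUV⟩ := hBr U V
    refine ⟨c / c₃, ?_⟩
    rw [hcUV, h₃, smul_smul]
    congr 1
    field_simp
  have hKEY' : ∀ U V : g, θ ⁅x, y⁆ U = 0 → θ ⁅x, y⁆ V = 0 → ⁅U, V⁆ = 0 := by
    intro U V hU hV
    have hU' : θ ⁅x₀, y₀⁆ U = 0 := by
      rw [h₃, θs1] at hU
      rcases mul_eq_zero.1 hU with h | h
      · exact absurd h hc₃
      · exact h
    have hV' : θ ⁅x₀, y₀⁆ V = 0 := by
      rw [h₃, θs1] at hV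
      rcases mul_eq_zero.1 hV with h | h
      · exact absurd h hc₃
      · exact h
    exact hKEY U V hU' hV'
  -- the center as a submodule
  set C : Submodule K g :=
    { carrier := {W : g | ∀ V : g, ⁅W, V⁆ = 0}
      add_mem' := by
        intro a b ha hb V
        rw [add_lie, ha V, hb V, add_zero]
      zero_mem' := by
        intro V
        rw [zero_lie]
      smul_mem' := by
        intro c w hw V
        rw [smul_lie, hw V, smul_zero] } with hCdef
  have hmemC : ∀ W : g, W ∈ C ↔ ∀ V : g, ⁅W, V⁆ = 0 := fun W => Iff.rfl
  have hzC : ⁅x, y⁆ ∈ C := by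
    rw [hmemC]
    intro V
    exact h21 x y V
  -- decomposition g = Kx + Ky + C
  have hdec0 : ∀ X : g, ∃ (a b : K) (c : g), c ∈ C ∧ X = a • x + b • y + c := by
    intro X
    obtain ⟨c₁, hc₁⟩ := hBr' X y
    set t := θ ⁅x, y⁆ (X - c₁ • x) / θ ⁅x, y⁆ y with ht
    set c := X - c₁ • x - t • y with hc
    have hcy : ⁅c, y⁆ = 0 := by
      rw [hc, sub_lie, sub_lie, smul_lie, smul_lie, hc₁, lie_self, smul_zero, sub_zero, sub_self]
    have hfc : θ ⁅x, y⁆ c = 0 := by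
      rw [hc, θsub2, θs2, ht]
      field_simp
      ring
    have hcC : c ∈ C := by
      rw [hmemC]
      intro V
      set s := θ ⁅x, y⁆ V / θ ⁅x, y⁆ y with hs
      have hV' : θ ⁅x, y⁆ (V - s • y) = 0 := by
        rw [θsub2, θs2, hs]
        field_simp
        ring
      have h1 : ⁅c, V - s • y⁆ = 0 := hKEY' c (V - s • y) hfc hV'
      calc ⁅c, V⁆ = ⁅c, (V - s • y) + s • y⁆ := by rw [sub_add_cancel]
        _ = ⁅c, V - s • y⁆ + s • ⁅c, y⁆ := by rw [lie_add, lie_smul]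
        _ = 0 := by rw [h1, hcy, smul_zero, add_zero]
    exact ⟨c₁, t, c, hcC, by rw [hc]; abel⟩
  have hind : ∀ (a b : K) (c : g), c ∈ C → a • x + b • y + c = 0 → a = 0 ∧ b = 0 ∧ c = 0 := by
    intro a b c hcC h
    have hcy : ⁅c, y⁆ = 0 := (hmemC c).1 hcC y
    have hcx : ⁅c, x⁆ = 0 := (hmemC c).1 hcC x
    have h1 : (0 : g) = a • ⁅x, y⁆ := by
      calc (0 : g) = ⁅a • x + b • y + c, y⁆ := by rw [h, zero_lie]
        _ = a • ⁅x, y⁆ := by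
            rw [add_lie, add_lie, smul_lie, smul_lie, lie_self, smul_zero, add_zero, hcy, add_zero]
    have ha : a = 0 := by
      rcases smul_eq_zero.1 h1.symm with h' | h'
      · exact h'
      · exact absurd h' hz
    have h2 : (0 : g) = -(b • ⁅x, y⁆) := by
      calc (0 : g) = ⁅a • x + b • y + c, x⁆ := by rw [h, zero_lie]
        _ = b • ⁅y, x⁆ := by
            rw [add_lie, add_lie, smul_lie, smul_lie, lie_self, smul_zero, zero_add, hcx, add_zero]
        _ = -(b • ⁅x, y⁆) := by rw [← lie_skew x y, smul_neg, neg_neg]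
    have hb : b = 0 := by
      have h2' : b • ⁅x, y⁆ = 0 := by
        rw [← neg_neg (b • ⁅x, y⁆), ← h2, neg_zero]
      rcases smul_eq_zero.1 h2' with h' | h'
      · exact h'
      · exact absurd h' hz
    refine ⟨ha, hb, ?_⟩
    rw [ha, hb] at h
    simpa using h
  -- the linear functional W ↦ θ W y
  set Ty : g →ₗ[K] K :=
    { toFun := fun W => θ W y
      map_add' := fun a b => θa1 a b y
      map_smul' := fun c a => θs1 c a y } with hTy
  have hTy_apply : ∀ W : g, Ty W = θ W y := fun W => rfl
  set D : Submodule K g := C ⊓ LinearMap.ker Ty with hDdef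
  have hD : ∀ d ∈ D, ∀ W : g, ⁅d, W⁆ = 0 := by
    intro d hd W
    exact (hmemC d).1 hd.1 W
  have hzD : ∀ s : K, s • ⁅x, y⁆ ∈ D → s = 0 := by
    intro s hs
    have this' := LinearMap.mem_ker.1 hs.2
    have this : s * θ ⁅x, y⁆ y = 0 := by
      rw [← this', map_smul, hTy_apply, smul_eq_mul]
    rcases mul_eq_zero.1 this with h | h
    · exact h
    · exact absurd h hfy
  -- refined decomposition
  have hdec : ∀ X : g, ∃ (a b s : K) (d : g), d ∈ D ∧ X = a • x + b • y + s • ⁅x, y⁆ + d := by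
    intro X
    obtain ⟨a, b, c, hcC, rfl⟩ := hdec0 X
    set s := θ c y / θ ⁅x, y⁆ y with hs
    have hker : Ty (c - s • ⁅x, y⁆) = 0 := by
      rw [map_sub, map_smul, hTy_apply, hTy_apply, smul_eq_mul, hs]
      field_simp
      ring
    exact ⟨a, b, s, c - s • ⁅x, y⁆,
      Submodule.mem_inf.2 ⟨Submodule.sub_mem C hcC (Submodule.smul_mem C s hzC),
        LinearMap.mem_ker.2 hker⟩, by abel⟩
  have hind' : ∀ (a b s : K) (d : g), d ∈ D → a • x + b • y + s • ⁅x, y⁆ + d = 0 →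
      a = 0 ∧ b = 0 ∧ s = 0 ∧ d = 0 := by
    intro a b s d hd h
    have hmem : s • ⁅x, y⁆ + d ∈ C := Submodule.add_mem C (Submodule.smul_mem C s hzC) hd.1
    have h' : a • x + b • y + (s • ⁅x, y⁆ + d) = 0 := by rw [← h]; abel
    obtain ⟨ha, hb, hcc⟩ := hind a b _ hmem h'
    have hTyd : Ty d = 0 := LinearMap.mem_ker.1 hd.2
    have hTys : Ty (s • ⁅x, y⁆ + d) = 0 := by rw [hcc, map_zero]
    rw [map_add, map_smul, hTyd, add_zero, hTy_apply, smul_eq_mul] at hTys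
    have hs : s = 0 := by
      rcases mul_eq_zero.1 hTys with h' | h'
      · exact h'
      · exact absurd h' hfy
    refine ⟨ha, hb, hs, ?_⟩
    rw [hs, zero_smul, zero_add] at hcc
    exact hcc
  -- dimension count
  have hxyLI : LinearIndependent K ![x, y] := by
    rw [LinearIndependent.pair_iff]
    intro s t hst
    have := hind s t 0 (Submodule.zero_mem C) (by rw [add_zero]; exact hst)
    exact ⟨this.1, this.2.1⟩
  set P : Submodule K g := Submodule.span K (Set.range ![x, y]) with hPdef
  have hxP : x ∈ P := Submodule.subset_span ⟨0, rfl⟩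
  have hyP : y ∈ P := Submodule.subset_span ⟨1, rfl⟩
  have hP2 : Module.finrank K ↥P = 2 := by
    rw [hPdef, finrank_span_eq_card hxyLI]
    simp
  have hPC_top : P ⊔ C = ⊤ := by
    rw [eq_top_iff]
    intro X _
    obtain ⟨a, b, c, hcC, rfl⟩ := hdec0 X
    exact Submodule.mem_sup.2 ⟨a • x + b • y,
      Submodule.add_mem P (Submodule.smul_mem P a hxP) (Submodule.smul_mem P b hyP),
      c, hcC, rfl⟩
  have hPC_bot : P ⊓ C = ⊥ := by
    rw [eq_bot_iff]
    rintro v ⟨hvP, hvC⟩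
    obtain ⟨cf, hcf⟩ := (Submodule.mem_span_range_iff_exists_fun K).1 hvP
    rw [Fin.sum_univ_two] at hcf
    simp only [Matrix.cons_val_zero, Matrix.cons_val_one, Matrix.head_cons] at hcf
    have h0 : cf 0 • x + cf 1 • y + (-v) = 0 := by rw [hcf]; abel
    have := hind (cf 0) (cf 1) (-v) (Submodule.neg_mem C hvC) h0
    have hv0 : v = 0 := by
      have := this.2.2
      simpa [neg_eq_zero] using this
    simp [hv0]
  have hdimC : 2 * p = 2 + Module.finrank K ↥C := by
    have h := Submodule.finrank_sup_add_finrank_inf_eq P C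
    rw [hPC_top, hPC_bot, finrank_top, hdim, hP2] at h
    simpa using h
  set Sz : Submodule K g := Submodule.span K {⁅x, y⁆} with hSzdef
  have hSzD_sup : Sz ⊔ D = C := by
    apply le_antisymm
    · apply sup_le
      · rw [hSzdef, Submodule.span_le, Set.singleton_subset_iff]
        exact hzC
      · exact inf_le_left
    · intro c hcC
      set s := θ c y / θ ⁅x, y⁆ y with hs
      have hker : Ty (c - s • ⁅x, y⁆) = 0 := by
        rw [map_sub, map_smul, hTy_apply, hTy_apply, smul_eq_mul, hs]
        field_simp
        ring
      have hdD : c - s • ⁅x, y⁆ ∈ D :=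
        Submodule.mem_inf.2 ⟨Submodule.sub_mem C hcC (Submodule.smul_mem C s hzC),
          LinearMap.mem_ker.2 hker⟩
      exact Submodule.mem_sup.2 ⟨s • ⁅x, y⁆,
        Submodule.smul_mem Sz s (Submodule.mem_span_singleton_self _),
        c - s • ⁅x, y⁆, hdD, by abel⟩
  have hSzD_inf : Sz ⊓ D = ⊥ := by
    rw [eq_bot_iff]
    rintro v ⟨hv1, hv2⟩
    obtain ⟨s, hs⟩ := Submodule.mem_span_singleton.1 hv1
    have : s = 0 := hzD s (by rw [hs]; exact hv2)
    simp [← hs, this]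
  have hdimD : Module.finrank K ↥C = 1 + Module.finrank K ↥D := by
    have h := Submodule.finrank_sup_add_finrank_inf_eq Sz D
    rw [hSzD_sup, hSzD_inf, hSzdef, finrank_span_singleton hz] at h
    simpa using h
  refine ⟨x, y, ⁅x, y⁆, D, ?_, hD, rfl, hz, hdec, hind', ?_⟩
  · intro W
    exact h21 x y W
  · omega

end Fwd

/-- For every `p ≥ 2`, a `2p`-dimensional 2-step nilpotent Lie algebra over `K` with
characteristic sequence `(2,1,…,1)` admits a symplectic form if and only if it is
isomorphic to `h₃ ⊕ K^{2p-3}`, the direct product of the 3-dimensional Heisenberg Lie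
algebra with the `(2p-3)`-dimensional abelian Lie algebra. -/
theorem twoPDim_charSeqOne_symplectic_iff
    (K : Type*) [RCLike K] (g : Type*) [LieRing g] [LieAlgebra K g] [FiniteDimensional K g]
    (p : ℕ) (hp : 2 ≤ p)
    (h2 : IsTwoStepNilpotent g) (hdim : Module.finrank K g = 2 * p)
    (hc : HasCharSeqTwos K g 1) :
    (∃ θ : g → g → K, IsSymplecticForm K g θ) ↔
      Nonempty (g ≃ₗ⁅K⁆ HeisenbergAbelian K 1 (2 * p - 3)) := by
  classical
  obtain ⟨h21, h22⟩ := h2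
  obtain ⟨hc1, -⟩ := hc
  constructor
  · rintro ⟨θ, hθ1, hθ2, hθalt, hθnd, hθcl⟩
    obtain ⟨x, y, z, D, hzcen, hDcen, hxyz, hz0, hdec, hind, hdimD⟩ :=
      forward_struct p hp h21 h22 hdim hc1 θ hθ1 hθ2 hθalt hθnd hθcl
    have hfr : Module.finrank K ↥D = Module.finrank K (Fin (2 * p - 3) → K) := by
      rw [Module.finrank_fin_fun, hdimD]
    let ψ : ↥D ≃ₗ[K] (Fin (2 * p - 3) → K) := LinearEquiv.ofFinrankEq _ _ hfr
    -- auxiliary vanishing lemmas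
    have hcenR : ∀ W c : g, (∀ V : g, ⁅c, V⁆ = 0) → ⁅W, c⁆ = 0 := by
      intro W c hc'
      rw [← lie_skew, hc' W, neg_zero]
    have hzL : ∀ W : g, ⁅z, W⁆ = 0 := hzcen
    have hzR : ∀ W : g, ⁅W, z⁆ = 0 := fun W => hcenR W z hzcen
    have hdL : ∀ (v : Fin (2 * p - 3) → K) (W : g), ⁅((ψ.symm v : ↥D) : g), W⁆ = 0 :=
      fun v W => hDcen _ (ψ.symm v).2 W
    have hdR : ∀ (v : Fin (2 * p - 3) → K) (W : g), ⁅W, ((ψ.symm v : ↥D) : g)⁆ = 0 :=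
      fun v W => hcenR W _ (fun V => hDcen _ (ψ.symm v).2 V)
    -- the linear map from the model to g
    let F : HeisenbergAbelian K 1 (2 * p - 3) →ₗ[K] g :=
      { toFun := fun u => u.1.1 0 • x + u.1.2 0 • y + u.2.1 • z + ((ψ.symm u.2.2 : ↥D) : g)
        map_add' := by
          intro u v
          have h1 : (u + v).1.1 0 = u.1.1 0 + v.1.1 0 := rfl
          have h2 : (u + v).1.2 0 = u.1.2 0 + v.1.2 0 := rfl
          have h3 : (u + v).2.1 = u.2.1 + v.2.1 := rfl
          have h4 : ψ.symm (u + v).2.2 = ψ.symm u.2.2 + ψ.symm v.2.2 := by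
            rw [show (u + v).2.2 = u.2.2 + v.2.2 from rfl, map_add]
          rw [h1, h2, h3, h4, Submodule.coe_add, add_smul, add_smul, add_smul]
          abel
        map_smul' := by
          intro a u
          have h1 : (a • u).1.1 0 = a * u.1.1 0 := rfl
          have h2 : (a • u).1.2 0 = a * u.1.2 0 := rfl
          have h3 : (a • u).2.1 = a * u.2.1 := rfl
          have h4 : ψ.symm (a • u).2.2 = a • ψ.symm u.2.2 := by
            rw [show (a • u).2.2 = a • u.2.2 from rfl, map_smul]
          rw [h1, h2, h3, h4, Submodule.coe_smul, RingHom.id_apply, mul_smul, mul_smul, mul_smul,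
            smul_add, smul_add, smul_add] }
    have hFapply : ∀ u : HeisenbergAbelian K 1 (2 * p - 3),
        F u = u.1.1 0 • x + u.1.2 0 • y + u.2.1 • z + ((ψ.symm u.2.2 : ↥D) : g) := fun u => rfl
    have hbr : ∀ u v : HeisenbergAbelian K 1 (2 * p - 3),
        ⁅F u, F v⁆ = (u.1.1 0 * v.1.2 0 - v.1.1 0 * u.1.2 0) • z := by
      intro u v
      rw [hFapply, hFapply]
      simp only [lie_add, add_lie, lie_smul, smul_lie, lie_self, hzL, hzR, hdL, hdR,
        smul_zero, zero_add, add_zero, hxyz]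
      rw [show ⁅y, x⁆ = -z from by rw [← lie_skew, hxyz]]
      module
    have hFinj : Function.Injective F := by
      have hker : ∀ u : HeisenbergAbelian K 1 (2 * p - 3), F u = 0 → u = 0 := by
        intro u hu
        rw [hFapply] at hu
        obtain ⟨ha, hb, hs, hd⟩ := hind (u.1.1 0) (u.1.2 0) u.2.1 _ (ψ.symm u.2.2).2 hu
        have hd2 : u.2.2 = 0 := by
          have : ψ.symm u.2.2 = 0 := by
            apply Subtype.ext
            simpa using hd
          have := congrArg ψ this
          rwa [ψ.apply_symm_apply, map_zero] at this
        have ha' : u.1.1 = 0 := by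
          funext i
          rw [Subsingleton.elim i 0]
          exact ha
        have hb' : u.1.2 = 0 := by
          funext i
          rw [Subsingleton.elim i 0]
          exact hb
        show ((u.1.1, u.1.2), (u.2.1, u.2.2)) = ((0, 0), (0, 0))
        rw [ha', hb', hs, hd2]
      intro u v huv
      have : F (u - v) = 0 := by rw [map_sub, huv, sub_self]
      have := hker _ this
      rwa [sub_eq_zero] at this
    have hFsurj : Function.Surjective F := by
      intro X
      obtain ⟨a, b, s, d, hdD, rfl⟩ := hdec X
      refine ⟨((fun _ => a, fun _ => b), (s, ψ ⟨d, hdD⟩)), ?_⟩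
      rw [hFapply]
      simp only [ψ.symm_apply_apply]
    let E := LinearEquiv.ofBijective F ⟨hFinj, hFsurj⟩
    have hmaplie : ∀ u v : HeisenbergAbelian K 1 (2 * p - 3), F ⁅u, v⁆ = ⁅F u, F v⁆ := by
      intro u v
      rw [hbr]
      have hb : (⁅u, v⁆ : HeisenbergAbelian K 1 (2 * p - 3)) = HeisenbergAbelian.brak u v := rfl
      rw [hb, hFapply]
      simp only [HeisenbergAbelian.brak, Fin.sum_univ_one, Pi.zero_apply, zero_smul,
        map_zero, zero_add, add_zero]
      rw [show ((0 : ↥D) : g) = 0 from rfl, add_zero]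
    have heqv : HeisenbergAbelian K 1 (2 * p - 3) ≃ₗ⁅K⁆ g :=
      { toLinearMap := F
        map_lie' := fun {u v} => hmaplie u v
        invFun := E.symm
        left_inv := E.left_inv
        right_inv := E.right_inv }
    exact ⟨heqv.symm⟩
  · rintro ⟨e⟩
    have hfr : Module.finrank K ((Fin 1 → K) × (Fin (2 * p - 3) → K)) =
        Module.finrank K ((Fin (p - 1) → K) × (Fin (p - 1) → K)) := by
      rw [Module.finrank_prod, Module.finrank_prod, Module.finrank_fin_fun,
        Module.finrank_fin_fun, Module.finrank_fin_fun]
      omega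
    let L : ((Fin 1 → K) × (Fin (2 * p - 3) → K)) ≃ₗ[K]
        ((Fin (p - 1) → K) × (Fin (p - 1) → K)) := LinearEquiv.ofFinrankEq _ _ hfr
    obtain ⟨m1, m2, m3, m4, m5⟩ := modelForm_isSymplectic L
    refine ⟨fun X Y => modelForm L (e X) (e Y), ?_, ?_, ?_, ?_, ?_⟩
    · intro a X Y Z
      dsimp only
      rw [show e (a • X + Y) = a • e X + e Y from
        by rw [map_add, map_smul], m1]
    · intro a X Y Z
      dsimp only
      rw [show e (a • Y + Z) = a • e Y + e Z from
        by rw [map_add, map_smul], m2]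
    · intro X
      exact m3 _
    · intro X hX
      have h0 : ∀ W, modelForm L (e X) W = 0 := by
        intro W
        have h1 := hX (e.symm W)
        dsimp only at h1
        rwa [e.apply_symm_apply] at h1
      have h2 : e X = 0 := m4 _ h0
      have h1 : e X = e 0 := by rw [h2]; exact (map_zero e).symm
      exact e.injective h1
    · intro X Y Z
      dsimp only
      rw [e.map_lie X Y, e.map_lie Y Z, e.map_lie Z X]
      exact m5 _ _ _
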